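/- Let w ≥ 5 and x ≥ 5 be integers, and assume we are not in one of the cases (w = 5 and x ≤ 7) or (w,x) = (6,5). Then the binomial coefficient C(x+w−1, w) satisfies C(x+w−1, w) ≤ x^(w − 0.73·w/ln(x)), as an inequality of real numbers. -/

import Mathlib

/-- The key polynomial inequality: `C(x+w-1, w) * 2.08^w ≤ x^w`. -/
private def Q (w x : ℕ) : Prop :=
  ((x + w - 1).choose w : ℝ) * 2.08 ^ w ≤ (x : ℝ) ^ w

private lemma xstep (w x : ℕ) (hx : 1 ≤ x) (h : Q w x) : Q w (x + 1) := by
  unfold Q at h ⊢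
  have hX0 : (0 : ℝ) < (x : ℝ) := by exact_mod_cast hx
  -- nat identity : C(x+w-1,w) * (x+w) = C(x+w,w) * x
  have hnat : (x + w - 1).choose w * (x + w) = (x + w).choose w * x := by
    have h1 : x + w - 1 + 1 = x + w := by omega
    have := Nat.choose_mul_succ_eq (x + w - 1) w
    rw [h1] at this
    have h2 : x + w - w = x := by omega
    rw [h2] at this
    exact this
  have hcast : ((x + w - 1).choose w : ℝ) * ((x : ℝ) + w) = ((x + w).choose w : ℝ) * x := by
    exact_mod_cast hnat
  have hK0 : (0 : ℝ) < 2.08 ^ w := by positivity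
  -- Bernoulli
  have hb : 1 + (w : ℝ) * (1 / x) ≤ (1 + 1 / (x : ℝ)) ^ w := by
    apply one_add_mul_le_pow
    have : (0:ℝ) ≤ 1 / (x:ℝ) := by positivity
    linarith
  have hmul : ((x : ℝ)) * (1 + 1 / (x : ℝ)) = (x : ℝ) + 1 := by
    field_simp
  have hb2 : (x : ℝ) ^ w * (1 + (w : ℝ) * (1 / x)) ≤ ((x : ℝ) + 1) ^ w := by
    calc (x : ℝ) ^ w * (1 + (w : ℝ) * (1 / x))
        ≤ (x : ℝ) ^ w * (1 + 1 / (x : ℝ)) ^ w := by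
          apply mul_le_mul_of_nonneg_left hb (by positivity)
      _ = ((x : ℝ) * (1 + 1 / (x : ℝ))) ^ w := (mul_pow _ _ _).symm
      _ = ((x : ℝ) + 1) ^ w := by rw [hmul]
  have hb3 : (x : ℝ) ^ w * ((x : ℝ) + w) ≤ ((x : ℝ) + 1) ^ w * x := by
    have : (x : ℝ) ^ w * (1 + (w : ℝ) * (1 / x)) * x ≤ ((x : ℝ) + 1) ^ w * x :=
      mul_le_mul_of_nonneg_right hb2 (le_of_lt hX0)
    calc (x : ℝ) ^ w * ((x : ℝ) + w)
        = (x : ℝ) ^ w * (1 + (w : ℝ) * (1 / x)) * x := by field_simp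
      _ ≤ ((x : ℝ) + 1) ^ w * x := this
  -- main chain, multiplied by x > 0
  rw [← mul_le_mul_iff_of_pos_right hX0]
  have hxw1 : x + 1 + w - 1 = x + w := by omega
  rw [hxw1]
  have hcasts : ((x : ℕ) : ℝ) + 1 = ((x + 1 : ℕ) : ℝ) := by push_cast; ring
  calc ((x + w).choose w : ℝ) * 2.08 ^ w * x
      = ((x + w).choose w : ℝ) * x * 2.08 ^ w := by ring
    _ = ((x + w - 1).choose w : ℝ) * ((x : ℝ) + w) * 2.08 ^ w := by rw [← hcast]
    _ = ((x + w - 1).choose w : ℝ) * 2.08 ^ w * ((x : ℝ) + w) := by ring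
    _ ≤ (x : ℝ) ^ w * ((x : ℝ) + w) := by
        apply mul_le_mul_of_nonneg_right h
        positivity
    _ ≤ ((x : ℝ) + 1) ^ w * x := hb3
    _ = ((x + 1 : ℕ) : ℝ) ^ w * x := by rw [hcasts]

private lemma wstep (w x : ℕ) (hw : 2 ≤ w) (hx : 5 ≤ x) (h : Q w x) : Q (w + 1) x := by
  unfold Q at h ⊢
  have hX0 : (0 : ℝ) < (x : ℝ) := by positivity
  have hX5 : (5 : ℝ) ≤ (x : ℝ) := by exact_mod_cast hx
  have hW2 : (2 : ℝ) ≤ (w : ℝ) := by exact_mod_cast hw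
  -- nat identity: (x+w) * C(x+w-1, w) = C(x+w, w+1) * (w+1)
  have hnat : (x + w) * (x + w - 1).choose w = (x + w).choose (w + 1) * (w + 1) := by
    have h1 : x + w - 1 + 1 = x + w := by omega
    have := Nat.add_one_mul_choose_eq (x + w - 1) w
    simpa [h1, Nat.succ_eq_add_one] using this
  have hcast : ((x : ℝ) + w) * ((x + w - 1).choose w : ℝ)
      = ((x + w).choose (w + 1) : ℝ) * ((w : ℝ) + 1) := by exact_mod_cast hnat
  have hw1 : x + (w + 1) - 1 = x + w := by omega
  rw [hw1]
  have hW1 : (0 : ℝ) < (w : ℝ) + 1 := by linarith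
  rw [← mul_le_mul_iff_of_pos_right hW1]
  -- key scalar inequality: 2.08 * (x + w) ≤ x * (w + 1)
  have hkey : 2.08 * ((x : ℝ) + w) ≤ (x : ℝ) * ((w : ℝ) + 1) := by nlinarith
  calc ((x + w).choose (w + 1) : ℝ) * 2.08 ^ (w + 1) * ((w : ℝ) + 1)
      = (((x + w).choose (w + 1) : ℝ) * ((w : ℝ) + 1)) * (2.08 ^ w * 2.08) := by
        rw [pow_succ]; ring
    _ = (((x : ℝ) + w) * ((x + w - 1).choose w : ℝ)) * (2.08 ^ w * 2.08) := by rw [hcast]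
    _ = (((x + w - 1).choose w : ℝ) * 2.08 ^ w) * (2.08 * ((x : ℝ) + w)) := by ring
    _ ≤ (x : ℝ) ^ w * (2.08 * ((x : ℝ) + w)) := by
        apply mul_le_mul_of_nonneg_right h
        nlinarith
    _ ≤ (x : ℝ) ^ w * ((x : ℝ) * ((w : ℝ) + 1)) := by
        apply mul_le_mul_of_nonneg_left hkey
        positivity
    _ = (x : ℝ) ^ (w + 1) * ((w : ℝ) + 1) := by rw [pow_succ]; ring

private lemma qmain (w x : ℕ) (hw : 5 ≤ w) (hx : 5 ≤ x)
    (h1 : ¬ (w = 5 ∧ x ≤ 7)) (h2 : ¬ (w = 6 ∧ x = 5)) : Q w x := by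
  -- first handle by cases on x
  rcases le_or_gt 8 x with hx8 | hx8
  · -- Q 5 x for all x ≥ 8, then induct on w
    have base : ∀ y : ℕ, 8 ≤ y → Q 5 y := by
      intro y hy
      induction y, hy using Nat.le_induction with
      | base =>
        unfold Q
        norm_num [show (8 + 5 - 1).choose 5 = 792 by decide]
      | succ n hn ih => exact xstep 5 n (by omega) ih
    have main : ∀ v : ℕ, 5 ≤ v → Q v x := by
      intro v hv
      induction v, hv using Nat.le_induction with
      | base => exact base x hx8
      | succ n hn ih => exact wstep n x (by omega) (by omega) ih
    exact main w hw
  · -- x ∈ {5, 6, 7}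
    interval_cases x
    · -- x = 5 : w ≥ 7
      have hw7 : 7 ≤ w := by omega
      clear h1 h2 hw
      induction w, hw7 using Nat.le_induction with
      | base =>
        unfold Q
        norm_num [show (5 + 7 - 1).choose 7 = 330 by decide]
      | succ n hn ih => exact wstep n 5 (by omega) (by omega) ih
    · -- x = 6 : w ≥ 6
      have hw6 : 6 ≤ w := by omega
      clear h1 h2 hw
      induction w, hw6 using Nat.le_induction with
      | base =>
        unfold Q
        norm_num [show (6 + 6 - 1).choose 6 = 462 by decide]
      | succ n hn ih => exact wstep n 6 (by omega) (by omega) ih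
    · -- x = 7 : w ≥ 6
      have hw6 : 6 ≤ w := by omega
      clear h1 h2 hw
      induction w, hw6 using Nat.le_induction with
      | base =>
        unfold Q
        norm_num [show (7 + 6 - 1).choose 6 = 924 by decide]
      | succ n hn ih => exact wstep n 7 (by omega) (by omega) ih

private lemma exp_073_le : Real.exp 0.73 ≤ 2.08 := by
  rw [← Real.le_log_iff_exp_le (by norm_num : (0:ℝ) < 2.08)]
  have h1 : Real.log 2.08 = Real.log 2 + Real.log 1.04 := by
    rw [← Real.log_mul (by norm_num) (by norm_num)]
    norm_num
  have h2 : (1 : ℝ) / 26 ≤ Real.log 1.04 := by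
    rw [Real.le_log_iff_exp_le (by norm_num : (0:ℝ) < 1.04)]
    have h3 := Real.add_one_le_exp (-(1 / 26 : ℝ))
    have h5 : (0 : ℝ) < Real.exp (1/26) := Real.exp_pos _
    have h6 : Real.exp (1/26 : ℝ) * Real.exp (-(1/26 : ℝ)) = 1 := by
      rw [← Real.exp_add]; norm_num
    nlinarith [h3, h5, h6, mul_le_mul_of_nonneg_left h3 (le_of_lt h5)]
  have h6 : (0.6931471803 : ℝ) ≤ Real.log 2 := le_of_lt Real.log_two_gt_d9
  rw [h1]
  norm_num at *
  linarith

theorem choose_le_rpow_of_ge_five (w x : ℕ) (hw : 5 ≤ w) (hx : 5 ≤ x)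
    (h1 : ¬ (w = 5 ∧ x ≤ 7)) (h2 : ¬ (w = 6 ∧ x = 5)) :
    ((x + w - 1).choose w : ℝ) ≤
      (x : ℝ) ^ ((w : ℝ) - 0.73 * (w : ℝ) / Real.log x) := by
  have hX0 : (0 : ℝ) < (x : ℝ) := by positivity
  have hX1 : (1 : ℝ) < (x : ℝ) := by
    have : (5 : ℝ) ≤ (x : ℝ) := by exact_mod_cast hx
    linarith
  have hlog : (0 : ℝ) < Real.log x := Real.log_pos hX1
  have hQ := qmain w x hw hx h1 h2
  unfold Q at hQ
  rw [Real.rpow_sub hX0, Real.rpow_natCast]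
  have hrpow : (x : ℝ) ^ (0.73 * (w : ℝ) / Real.log x) = Real.exp 0.73 ^ w := by
    rw [Real.rpow_def_of_pos hX0]
    rw [show Real.log x * (0.73 * (w : ℝ) / Real.log x) = (w : ℝ) * 0.73 by
      field_simp]
    exact Real.exp_nat_mul 0.73 w
  rw [hrpow]
  rw [le_div_iff₀ (by positivity)]
  calc ((x + w - 1).choose w : ℝ) * Real.exp 0.73 ^ w
      ≤ ((x + w - 1).choose w : ℝ) * 2.08 ^ w := by
        apply mul_le_mul_of_nonneg_left _ (by positivity)
        exact pow_le_pow_left₀ (le_of_lt (Real.exp_pos _)) exp_073_le w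
    _ ≤ (x : ℝ) ^ w := hQ
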